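/- arXiv:2205.04548 — 4 statements merged into one kernel-verified Lean document; each statement's English description precedes it below -/
import Mathlib

section
/- Let G = (V, E) be a finite connected weighted graph with nonnegative edge weights w, and let S be a minimum spanning tree of G. Let e = {u, v} (u ≠ v, e ∉ E) be a new edge with nonnegative weight w(e), and let G' be the graph (V, E ∪ {e}) with the extended weight function. The subgraph S ∪ {e} contains a unique cycle C. If f is an edge of C other than e whose weight is maximal among the edges of C \ {e}, and w(f) > w(e), then (S \ {f}) ∪ {e} is a minimum spanning tree of G'. -/
open SimpleGraph

/-- A spanning tree of `G` is a subgraph of `G` (on the same vertex set) that is a tree,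
i.e. connected and acyclic. -/
def IsSpanningTree {V : Type*} (G H : SimpleGraph V) : Prop :=
  H ≤ G ∧ H.IsTree

/-- The total weight of (the edges of) a graph `H` with edge-weight function `w`. -/
noncomputable def treeWeight {V : Type*} [Finite V] (H : SimpleGraph V)
    (w : Sym2 V → ℝ) : ℝ :=
  ∑ e ∈ (Set.toFinite H.edgeSet).toFinset, w e

/-- `H` is a minimum spanning tree of the weighted graph `(G, w)`. -/
def IsMST {V : Type*} [Finite V] (G : SimpleGraph V) (w : Sym2 V → ℝ)
    (H : SimpleGraph V) : Prop :=
  IsSpanningTree G H ∧ ∀ H', IsSpanningTree G H' → treeWeight H w ≤ treeWeight H' w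

private lemma reach_del_aux {V : Type*} {H : SimpleGraph V} {u v : V} :
    ∀ {a b : V}, H.Walk a b →
    (H.deleteEdges {s(u,v)}).Reachable a b ∨
    ((H.deleteEdges {s(u,v)}).Reachable a u ∧ (H.deleteEdges {s(u,v)}).Reachable v b) ∨
    ((H.deleteEdges {s(u,v)}).Reachable a v ∧ (H.deleteEdges {s(u,v)}).Reachable u b) := by
  intro a b p
  induction p with
  | nil => exact Or.inl (Reachable.refl _)
  | @cons a c b h p ih =>
    by_cases hac : s(a,c) = s(u,v)
    · rw [Sym2.eq_iff] at hac
      rcases hac with ⟨rfl, rfl⟩ | ⟨rfl, rfl⟩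
      · rcases ih with h1 | ⟨h1, h2⟩ | ⟨h1, h2⟩
        · exact Or.inr (Or.inl ⟨Reachable.refl _, h1⟩)
        · exact Or.inr (Or.inl ⟨Reachable.refl _, h2⟩)
        · exact Or.inl h2
      · rcases ih with h1 | ⟨h1, h2⟩ | ⟨h1, h2⟩
        · exact Or.inr (Or.inr ⟨Reachable.refl _, h1⟩)
        · exact Or.inl h2
        · exact Or.inr (Or.inr ⟨Reachable.refl _, h2⟩)
    · have hK : (H.deleteEdges {s(u,v)}).Adj a c := by
        simp only [deleteEdges_adj, Set.mem_singleton_iff]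
        exact ⟨h, hac⟩
      rcases ih with h1 | ⟨h1, h2⟩ | ⟨h1, h2⟩
      · exact Or.inl (hK.reachable.trans h1)
      · exact Or.inr (Or.inl ⟨hK.reachable.trans h1, h2⟩)
      · exact Or.inr (Or.inr ⟨hK.reachable.trans h1, h2⟩)

private lemma scan_walk {V : Type*} {H : SimpleGraph V} (P : V → Prop) :
    ∀ {a b : V} (p : H.Walk a b), P a → ¬ P b →
      ∃ x y, H.Adj x y ∧ s(x, y) ∈ p.edges ∧ P x ∧ ¬ P y := by
  intro a b p
  induction p with
  | nil => intro ha hb; exact absurd ha hb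
  | @cons a c b h q ih =>
    intro ha hb
    by_cases hc : P c
    · obtain ⟨x, y, h1, h2, h3, h4⟩ := ih hc hb
      exact ⟨x, y, h1, by simp [h2], h3, h4⟩
    · exact ⟨a, c, h, by simp, ha, hc⟩

private lemma split_at_edge {V : Type*} {H : SimpleGraph V} {x y : V} :
    ∀ {a b : V} (p : H.Walk a b), p.IsTrail → s(x, y) ∈ p.edges →
      ((H.deleteEdges {s(x,y)}).Reachable a x ∧ (H.deleteEdges {s(x,y)}).Reachable y b) ∨
      ((H.deleteEdges {s(x,y)}).Reachable a y ∧ (H.deleteEdges {s(x,y)}).Reachable x b) := by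
  intro a b p
  induction p with
  | nil => intro _ h; simp at h
  | @cons a c b h q ih =>
    intro ht he
    have hnd := ht.edges_nodup
    rw [Walk.edges_cons, List.nodup_cons] at hnd
    rw [Walk.edges_cons, List.mem_cons] at he
    rcases he with he | he
    · have hq : s(x,y) ∉ q.edges := by rw [he]; exact hnd.1
      have hreach : (H.deleteEdges {s(x,y)}).Reachable c b :=
        ⟨q.toDeleteEdges _ (fun e' he' => by
          simp only [Set.mem_singleton_iff]
          rintro rfl; exact hq he')⟩
      rw [Sym2.eq_iff] at he
      rcases he with ⟨rfl, rfl⟩ | ⟨rfl, rfl⟩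
      · exact Or.inl ⟨Reachable.refl _, hreach⟩
      · exact Or.inr ⟨Reachable.refl _, hreach⟩
    · have hK : (H.deleteEdges {s(x,y)}).Adj a c := by
        simp only [deleteEdges_adj, Set.mem_singleton_iff]
        refine ⟨h, fun hh => ?_⟩
        rw [← hh] at he
        exact hnd.1 he
      rcases ih ht.of_cons he with ⟨h1, h2⟩ | ⟨h1, h2⟩
      · exact Or.inl ⟨hK.reachable.trans h1, h2⟩
      · exact Or.inr ⟨hK.reachable.trans h1, h2⟩

private lemma treeWeight_swap {V : Type*} [Fintype V] (A : SimpleGraph V) (w : Sym2 V → ℝ)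
    {f' e' : Sym2 V} (hf : f' ∈ A.edgeSet) (he : e' ∉ A.edgeSet) (hd : ¬ e'.IsDiag) :
    treeWeight ((A.deleteEdges {f'}) ⊔ fromEdgeSet {e'}) w = treeWeight A w - w f' + w e' := by
  classical
  have hne : e' ≠ f' := fun h => he (h ▸ hf)
  have hfin : (Set.toFinite ((A.deleteEdges {f'}) ⊔ fromEdgeSet {e'}).edgeSet).toFinset
      = insert e' ((Set.toFinite A.edgeSet).toFinset.erase f') := by
    ext g
    simp only [Set.Finite.mem_toFinset, edgeSet_sup, edgeSet_deleteEdges, edgeSet_fromEdgeSet,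
      Set.mem_union, Set.mem_diff, Set.mem_singleton_iff, Set.mem_setOf_eq, Finset.mem_insert,
      Finset.mem_erase]
    constructor
    · rintro (⟨h1, h2⟩ | ⟨h1, _⟩)
      · exact Or.inr ⟨h2, h1⟩
      · exact Or.inl h1
    · rintro (rfl | ⟨h1, h2⟩)
      · exact Or.inr ⟨rfl, hd⟩
      · exact Or.inl ⟨h2, h1⟩
  rw [treeWeight, treeWeight, hfin, Finset.sum_insert (by
    simp only [Finset.mem_erase, Set.Finite.mem_toFinset]
    rintro ⟨-, h⟩; exact he h)]
  rw [← Finset.sum_erase_add _ _ (by simpa using hf : f' ∈ (Set.toFinite A.edgeSet).toFinset)]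
  ring

private lemma acyclic_mono {V : Type*} {A B : SimpleGraph V} (h : A ≤ B) (hB : B.IsAcyclic) :
    A.IsAcyclic :=
  fun _ c hc => hB (c.mapLe h) ((Walk.mapLe_isCycle h).mpr hc)

private lemma acyclic_sup_edge {V : Type*} {A : SimpleGraph V} {x y : V}
    (hA : A.IsAcyclic) (hr : ¬ A.Reachable x y) :
    (A ⊔ fromEdgeSet {s(x,y)}).IsAcyclic := by
  intro b D hD
  by_cases hg : s(x,y) ∈ D.edges
  · have hreach : ((A ⊔ fromEdgeSet {s(x,y)}) \ fromEdgeSet {s(x,y)}).Reachable x y :=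
      (adj_and_reachable_delete_edges_iff_exists_cycle.mpr ⟨b, D, hD, hg⟩).2
    have hle : ((A ⊔ fromEdgeSet {s(x,y)}).deleteEdges {s(x,y)}) ≤ A := by
      intro p q hpq
      simp only [deleteEdges_adj, sup_adj, fromEdgeSet_adj, Set.mem_singleton_iff] at hpq
      tauto
    exact hr (Reachable.mono hle hreach)
  · refine hA (D.transfer A ?_) (hD.transfer _)
    intro g hgD
    have hmem := D.edges_subset_edgeSet hgD
    rw [edgeSet_sup, edgeSet_fromEdgeSet] at hmem
    rcases hmem with h | h
    · exact h
    · exact absurd (Set.mem_singleton_iff.mp h.1 ▸ hgD) hg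

private lemma connected_of_del {V : Type*} {H K : SimpleGraph V} {u v : V}
    (hH : H.Connected) (hle : H.deleteEdges {s(u,v)} ≤ K) (hr : K.Reachable u v) :
    K.Connected := by
  have hne := hH.nonempty
  refine ⟨fun z z' => ?_⟩
  obtain ⟨p⟩ := hH.preconnected z z'
  rcases reach_del_aux (u := u) (v := v) p with h | ⟨h1, h2⟩ | ⟨h1, h2⟩
  · exact h.mono hle
  · exact ((h1.mono hle).trans hr).trans (h2.mono hle)
  · exact ((h1.mono hle).trans hr.symm).trans (h2.mono hle)

private lemma reach_uv {V : Type*} {H : SimpleGraph V} {u v : V} (hH : H.Connected) (z : V) :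
    (H.deleteEdges {s(u,v)}).Reachable u z ∨ (H.deleteEdges {s(u,v)}).Reachable v z := by
  obtain ⟨p⟩ := hH.preconnected u z
  rcases reach_del_aux (u := u) (v := v) p with h | ⟨h1, h2⟩ | ⟨h1, h2⟩
  · exact Or.inl h
  · exact Or.inr h2
  · exact Or.inl h2

/-- Cycle property / edge swap: if `S` is an MST of `G`, a new edge `e = s(u,v) ∉ E` is
added to `G`, `C` is the (unique) cycle of `S ∪ {e}`, and `f` is an edge of `C` other
than `e` of maximal weight among the edges of `C \ {e}` with `w f > w e`, then
`(S \ {f}) ∪ {e}` is an MST of `G' = (V, E ∪ {e})`. -/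
theorem mst_edge_swap {V : Type*} [Fintype V]
    (G : SimpleGraph V) (w : Sym2 V → ℝ)
    (hG : G.Connected) (hw : ∀ e, 0 ≤ w e)
    (S : SimpleGraph V) (hS : IsMST G w S)
    (u v : V) (huv : u ≠ v) (he : ¬ G.Adj u v)
    (a : V) (C : (S ⊔ fromEdgeSet {s(u, v)}).Walk a a) (hC : C.IsCycle)
    (f : Sym2 V) (hf : f ∈ C.edges) (hfe : f ≠ s(u, v))
    (hmax : ∀ f' ∈ C.edges, f' ≠ s(u, v) → w f' ≤ w f)
    (hlt : w s(u, v) < w f) :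
    IsMST (G ⊔ fromEdgeSet {s(u, v)}) w
      ((S.deleteEdges {f}) ⊔ fromEdgeSet {s(u, v)}) := by
  classical
  obtain ⟨⟨hSG, hStree⟩, hSmin⟩ := hS
  have hScon := hStree.isConnected
  have hSac := hStree.IsAcyclic
  have heS : s(u, v) ∉ S.edgeSet := fun h => he (hSG h)
  -- represent f
  have hex : ∃ x y, f = s(x, y) := by
    induction f using Sym2.ind with
    | _ x y => exact ⟨x, y, rfl⟩
  obtain ⟨x, y, rfl⟩ := hex
  -- basic facts
  have heC : s(u, v) ∈ C.edges := by
    by_contra hne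
    refine hSac (C.transfer S ?_) (hC.transfer _)
    intro g hg
    have hmem := C.edges_subset_edgeSet hg
    rw [edgeSet_sup, edgeSet_fromEdgeSet] at hmem
    rcases hmem with h | h
    · exact h
    · exact absurd (Set.mem_singleton_iff.mp h.1 ▸ hg) hne
  have hfS : s(x, y) ∈ S.edgeSet := by
    have hmem := C.edges_subset_edgeSet hf
    rw [edgeSet_sup, edgeSet_fromEdgeSet] at hmem
    rcases hmem with h | h
    · exact h
    · exact absurd (Set.mem_singleton_iff.mp h.1) hfe
  have hxyAdj : S.Adj x y := hfS
  -- f is a bridge of S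
  have hbf : ¬ (S.deleteEdges {s(x, y)}).Reachable x y := by
    have hbr := isAcyclic_iff_forall_edge_isBridge.mp hSac hfS
    rw [isBridge_iff] at hbr
    exact hbr
  -- endpoints of f are reachable in (S ⊔ e) minus f
  have hCxy : ((S ⊔ fromEdgeSet {s(u, v)}).deleteEdges {s(x, y)}).Reachable x y :=
    (adj_and_reachable_delete_edges_iff_exists_cycle.mpr ⟨a, C, hC, hf⟩).2
  have hle1 : ((S ⊔ fromEdgeSet {s(u, v)}).deleteEdges {s(x, y)}).deleteEdges {s(u, v)}
      ≤ S.deleteEdges {s(x, y)} := by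
    intro p q hpq
    simp only [deleteEdges_adj, sup_adj, fromEdgeSet_adj, Set.mem_singleton_iff] at hpq ⊢
    tauto
  have key1 : ¬ (S.deleteEdges {s(x, y)}).Reachable u v := by
    intro hruv
    obtain ⟨pw⟩ := hCxy
    rcases reach_del_aux (u := u) (v := v) pw with h | ⟨h1, h2⟩ | ⟨h1, h2⟩
    · exact hbf (h.mono hle1)
    · exact hbf (((h1.mono hle1).trans hruv).trans (h2.mono hle1))
    · exact hbf (((h1.mono hle1).trans hruv.symm).trans (h2.mono hle1))
  -- T := (S \ f) ⊔ e is a spanning tree of G'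
  have hle2 : (S ⊔ fromEdgeSet {s(u, v)}).deleteEdges {s(x, y)}
      ≤ (S.deleteEdges {s(x, y)}) ⊔ fromEdgeSet {s(u, v)} := by
    intro p q hpq
    simp only [deleteEdges_adj, sup_adj, fromEdgeSet_adj, Set.mem_singleton_iff] at hpq ⊢
    tauto
  have hTconn : ((S.deleteEdges {s(x, y)}) ⊔ fromEdgeSet {s(u, v)}).Connected :=
    connected_of_del (hScon.mono le_sup_left) hle2 (hCxy.mono hle2)
  have hTac : ((S.deleteEdges {s(x, y)}) ⊔ fromEdgeSet {s(u, v)}).IsAcyclic :=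
    acyclic_sup_edge (acyclic_mono (deleteEdges_le _) hSac) key1
  have hTle : (S.deleteEdges {s(x, y)}) ⊔ fromEdgeSet {s(u, v)}
      ≤ G ⊔ fromEdgeSet {s(u, v)} :=
    sup_le_sup_right ((deleteEdges_le _).trans hSG) _
  have hdiag : ¬ (s(u, v) : Sym2 V).IsDiag := by
    rw [Sym2.mk_isDiag_iff]; exact huv
  have hwT : treeWeight ((S.deleteEdges {s(x, y)}) ⊔ fromEdgeSet {s(u, v)}) w
      = treeWeight S w - w s(x, y) + w s(u, v) :=
    treeWeight_swap S w hfS heS hdiag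
  refine ⟨⟨hTle, ⟨hTconn, hTac⟩⟩, ?_⟩
  -- minimality
  rintro H' ⟨hH'le, hH'tree⟩
  by_cases heH' : s(u, v) ∈ H'.edgeSet
  · -- H' contains e
    have hbr : ¬ (H'.deleteEdges {s(u, v)}).Reachable u v := by
      have hb := isAcyclic_iff_forall_edge_isBridge.mp hH'tree.IsAcyclic heH'
      rw [isBridge_iff] at hb
      exact hb
    -- scan a u-v path in S for a cut-crossing edge
    obtain ⟨q⟩ := hScon.preconnected u v
    obtain ⟨x₀, y₀, hadj, hmem, hRx, hRy⟩ :=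
      scan_walk (fun z => (H'.deleteEdges {s(u, v)}).Reachable u z)
        (q.toPath : S.Walk u v) (Reachable.refl u) hbr
    have hgS : s(x₀, y₀) ∈ S.edgeSet := hadj
    have hgne : s(x₀, y₀) ≠ s(u, v) := fun h => heS (h ▸ hgS)
    -- u, v are disconnected in S minus g
    have hbg : ¬ (S.deleteEdges {s(x₀, y₀)}).Reachable x₀ y₀ := by
      have hb := isAcyclic_iff_forall_edge_isBridge.mp hSac hgS
      rw [isBridge_iff] at hb
      exact hb
    have hnr : ¬ (S.deleteEdges {s(x₀, y₀)}).Reachable u v := by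
      intro hr
      rcases split_at_edge (q.toPath : S.Walk u v) q.toPath.2.isTrail hmem with
        ⟨h1, h2⟩ | ⟨h1, h2⟩
      · exact hbg (h1.symm.trans (hr.trans h2.symm))
      · exact hbg (h2.trans (hr.symm.trans h1))
    -- the crossing edge lies on the cycle C
    have hgC : s(x₀, y₀) ∈ C.edges := by
      by_contra hgC
      have hCd : ∀ e', e' ∈ C.edges → e' ∉ ({s(x₀, y₀)} : Set (Sym2 V)) := by
        intro e' he'
        simp only [Set.mem_singleton_iff]
        rintro rfl; exact hgC he'
      have hC' : (C.toDeleteEdges {s(x₀, y₀)} hCd).IsCycle := hC.toDeleteEdges _ ({s(x₀, y₀)} : Set (Sym2 V)) hCd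
      have heC' : s(u, v) ∈ (C.toDeleteEdges {s(x₀, y₀)} hCd).edges := by
        rwa [Walk.toDeleteEdges, Walk.edges_transfer]
      have hreach : (((S ⊔ fromEdgeSet {s(u, v)}).deleteEdges {s(x₀, y₀)}).deleteEdges
          {s(u, v)}).Reachable u v :=
        (adj_and_reachable_delete_edges_iff_exists_cycle.mpr ⟨a, _, hC', heC'⟩).2
      have hle3 : ((S ⊔ fromEdgeSet {s(u, v)}).deleteEdges {s(x₀, y₀)}).deleteEdges {s(u, v)}
          ≤ S.deleteEdges {s(x₀, y₀)} := by
        intro p' q' hpq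
        simp only [deleteEdges_adj, sup_adj, fromEdgeSet_adj, Set.mem_singleton_iff] at hpq ⊢
        tauto
      exact hnr (hreach.mono hle3)
    have hwg : w s(x₀, y₀) ≤ w s(x, y) := hmax _ hgC hgne
    -- the swapped tree H'' inside G
    have hgH' : s(x₀, y₀) ∉ H'.edgeSet := by
      intro hgH
      have hadj' : (H'.deleteEdges {s(u, v)}).Adj x₀ y₀ := by
        simp only [deleteEdges_adj, Set.mem_singleton_iff]
        exact ⟨hgH, hgne⟩
      exact hRy (hRx.trans hadj'.reachable)
    have hH''le : (H'.deleteEdges {s(u, v)}) ⊔ fromEdgeSet {s(x₀, y₀)} ≤ G := by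
      refine sup_le ?_ ?_
      · intro p' q' hpq
        simp only [deleteEdges_adj, Set.mem_singleton_iff] at hpq
        rcases hH'le hpq.1 with h | h
        · exact h
        · rw [fromEdgeSet_adj] at h
          exact absurd (Set.mem_singleton_iff.mp h.1) hpq.2
      · intro p' q' hpq
        rw [fromEdgeSet_adj, Set.mem_singleton_iff, Sym2.eq_iff] at hpq
        rcases hpq.1 with ⟨rfl, rfl⟩ | ⟨rfl, rfl⟩
        · exact hSG hadj
        · exact (hSG hadj).symm
    have hy₀v : (H'.deleteEdges {s(u, v)}).Reachable v y₀ := by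
      rcases reach_uv (u := u) (v := v) hH'tree.isConnected y₀ with h | h
      · exact absurd h hRy
      · exact h
    have hH''conn : ((H'.deleteEdges {s(u, v)}) ⊔ fromEdgeSet {s(x₀, y₀)}).Connected := by
      refine connected_of_del hH'tree.isConnected le_sup_left ?_
      have h1 : ((H'.deleteEdges {s(u, v)}) ⊔ fromEdgeSet {s(x₀, y₀)}).Adj x₀ y₀ := by
        right
        rw [fromEdgeSet_adj]
        exact ⟨rfl, hadj.ne⟩
      exact ((hRx.mono le_sup_left).trans h1.reachable).trans (hy₀v.mono le_sup_left).symm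
    have hH''ac : ((H'.deleteEdges {s(u, v)}) ⊔ fromEdgeSet {s(x₀, y₀)}).IsAcyclic := by
      refine acyclic_sup_edge (acyclic_mono (deleteEdges_le _) hH'tree.IsAcyclic) ?_
      intro hr
      exact hRy (hRx.trans hr)
    have hSm := hSmin _ ⟨hH''le, ⟨hH''conn, hH''ac⟩⟩
    have hwH'' : treeWeight ((H'.deleteEdges {s(u, v)}) ⊔ fromEdgeSet {s(x₀, y₀)}) w
        = treeWeight H' w - w s(u, v) + w s(x₀, y₀) := by
      refine treeWeight_swap H' w heH' hgH' ?_
      rw [Sym2.mk_isDiag_iff]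
      exact hadj.ne
    rw [hwT]
    rw [hwH''] at hSm
    linarith
  · -- H' does not contain e, so it is a spanning tree of G
    have hH'G : H' ≤ G := by
      intro p' q' hpq
      rcases hH'le hpq with h | h
      · exact h
      · rw [fromEdgeSet_adj] at h
        exact absurd (Set.mem_singleton_iff.mp h.1 ▸ hpq) heH'
    have hSm := hSmin H' ⟨hH'G, hH'tree⟩
    rw [hwT]
    linarith
end

section
/- Let G = (V, E) be a finite connected weighted graph with nonnegative edge weights w, let S be a minimum spanning tree of G, let e = {u, v} ∈ E \ S, and let h ∈ ℝ be a lower bound with h ≤ w(e). If h is strictly greater than the maximum weight of the edges on the unique path in S between u and v, then e is not contained in any minimum spanning tree of G. -/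
open SimpleGraph

private lemma walk_reach_or_reach {V : Type*} {K H : SimpleGraph V} {u v : V}
    (hstep : ∀ ⦃x y : V⦄, H.Adj x y → s(x, y) ≠ s(u, v) → K.Adj x y) :
    ∀ {x y : V}, H.Walk x y →
      (K.Reachable x y ∨ K.Reachable x u ∨ K.Reachable x v) := by
  intro x y q
  induction q with
  | nil => exact Or.inl (Reachable.refl _)
  | @cons x z _ hxz q ih =>
    by_cases hE : s(x, z) = s(u, v)
    · rcases Sym2.eq_iff.mp hE with ⟨rfl, rfl⟩ | ⟨rfl, rfl⟩
      · exact Or.inr (Or.inl (Reachable.refl _))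
      · exact Or.inr (Or.inr (Reachable.refl _))
    · have hK : K.Adj x z := hstep hxz hE
      rcases ih with h1 | h1 | h1
      · exact Or.inl (hK.reachable.trans h1)
      · exact Or.inr (Or.inl (hK.reachable.trans h1))
      · exact Or.inr (Or.inr (hK.reachable.trans h1))

/-- Pruning with a lower bound: if `S` is an MST of `G`, `e = s(u,v) ∈ E \ S`, and
`h ≤ w e` is a lower bound that is strictly greater than the weight of every edge on
the unique path in `S` between `u` and `v`, then `e` is in no MST of `G`. -/
theorem mst_prune_with_lower_bound {V : Type*} [Fintype V]
    (G : SimpleGraph V) (w : Sym2 V → ℝ)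
    (hG : G.Connected) (hw : ∀ e, 0 ≤ w e)
    (S : SimpleGraph V) (hS : IsMST G w S)
    (u v : V) (hGe : G.Adj u v) (hSe : ¬ S.Adj u v)
    (h : ℝ) (hle : h ≤ w s(u, v))
    (hgt : ∀ (p : S.Walk u v), p.IsPath → ∀ f ∈ p.edges, w f < h) :
    ∀ H, IsMST G w H → s(u, v) ∉ H.edgeSet := by
  classical
  intro H hH heH
  obtain ⟨⟨hHle, hHtree⟩, hHmin⟩ := hH
  obtain ⟨⟨hSle, hStree⟩, _⟩ := hS
  have hHe : H.Adj u v := heH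
  set K : SimpleGraph V := H \ fromEdgeSet {s(u, v)} with hKdef
  have hKle : K ≤ H := sdiff_le
  have hbridge : H.IsBridge s(u, v) :=
    (isAcyclic_iff_forall_adj_isBridge.1 hHtree.2) hHe
  have hnr : ¬ K.Reachable u v := isBridge_iff.1 hbridge
  -- every vertex K-reaches u or v
  have hstep : ∀ ⦃x y : V⦄, H.Adj x y → s(x, y) ≠ s(u, v) → K.Adj x y := by
    intro x y hxy hne
    rw [hKdef, sdiff_adj, fromEdgeSet_adj]
    exact ⟨hxy, fun hc => hne hc.1⟩
  have hclass : ∀ x : V, K.Reachable x u ∨ K.Reachable x v := by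
    intro x
    obtain ⟨q⟩ : H.Reachable x u := hHtree.1.preconnected x u
    rcases walk_reach_or_reach hstep q with h1 | h1 | h1
    · exact Or.inl h1
    · exact Or.inl h1
    · exact Or.inr h1
  -- the path in S and a boundary dart
  obtain ⟨p, hp, -⟩ := hStree.existsUnique_path u v
  obtain ⟨d, hd, hda, hdb⟩ :=
    p.exists_boundary_dart {x | K.Reachable u x} (Reachable.refl u) hnr
  set a := d.fst
  set b := d.snd
  have hab : S.Adj a b := d.adj
  have hfp : s(a, b) ∈ p.edges := by
    have := List.mem_map_of_mem (f := SimpleGraph.Dart.edge) hd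
    exact this
  have hwf : w s(a, b) < h := hgt p hp _ hfp
  have hKua : K.Reachable u a := hda
  have hKnub : ¬ K.Reachable u b := hdb
  have hKbv : K.Reachable b v := by
    rcases hclass b with h1 | h1
    · exact absurd h1.symm hKnub
    · exact h1
  have hfe : s(a, b) ≠ s(u, v) := by
    intro hq
    exact hSe (S.mem_edgeSet.mp (hq ▸ S.mem_edgeSet.mpr hab))
  have hfH : ¬ H.Adj a b := by
    intro hq
    have hKab : K.Adj a b := by
      rw [hKdef, sdiff_adj, fromEdgeSet_adj]
      exact ⟨hq, by simp [hfe]⟩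
    exact hKnub (hKua.trans hKab.reachable)
  -- the new graph
  set H' : SimpleGraph V := K ⊔ fromEdgeSet {s(a, b)} with hH'def
  have hFadj : (fromEdgeSet {s(a, b)} : SimpleGraph V).Adj a b := by
    rw [fromEdgeSet_adj]; exact ⟨rfl, hab.ne⟩
  have hH'le : H' ≤ G := by
    intro x y hxy
    rcases (sup_adj _ _ _ _).mp hxy with h1 | h1
    · exact hHle (hKle h1)
    · rw [fromEdgeSet_adj] at h1
      obtain ⟨hm, hne⟩ := h1
      have : S.Adj x y := S.mem_edgeSet.mp (by rw [Set.mem_singleton_iff.mp hm]; exact S.mem_edgeSet.mpr hab)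
      exact hSle this
  have hKleH' : K ≤ H' := le_sup_left
  have hruv : H'.Reachable u v :=
    ((hKua.mono hKleH').trans
      ((hFadj.reachable.mono le_sup_right).trans (hKbv.mono hKleH')))
  have hH'conn : H'.Connected := by
    rw [connected_iff]
    refine ⟨?_, ⟨u⟩⟩
    have key : ∀ x : V, H'.Reachable x u := by
      intro x
      rcases hclass x with h1 | h1
      · exact h1.mono hKleH'
      · exact (h1.mono hKleH').trans hruv.symm
    intro x y
    exact (key x).trans (key y).symm
  have hH'acyc : H'.IsAcyclic := by
    intro x c hc
    by_cases hfc : s(a, b) ∈ c.edges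
    · have hreach : (H' \ fromEdgeSet {s(a, b)}).Reachable a b :=
        (SimpleGraph.adj_and_reachable_delete_edges_iff_exists_cycle.mpr
          ⟨x, c, hc, hfc⟩).2
      have hle' : H' \ fromEdgeSet {s(a, b)} ≤ K := by
        rw [hH'def, sup_sdiff_right_self]
        exact sdiff_le.trans le_rfl
      exact hKnub (hKua.trans (hreach.mono hle'))
    · have hce : ∀ g ∈ c.edges, g ∈ K.edgeSet := by
        intro g hg
        have hgH' : g ∈ H'.edgeSet := c.edges_subset_edgeSet hg
        rw [hH'def, edgeSet_sup] at hgH'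
        rcases hgH' with h1 | h1
        · exact h1
        · rw [edgeSet_fromEdgeSet] at h1
          exfalso
          exact hfc (by rwa [Set.mem_singleton_iff.mp h1.1] at hg)
      have hcK : ((c.transfer K hce).mapLe hKle).IsCycle :=
        (hc.transfer hce).mapLe hKle
      exact hHtree.2 _ hcK
  -- edge sets and weights
  have hand : ¬ (s(u,v)).IsDiag := by simp [hGe.ne]
  have hfnd : ¬ (s(a,b)).IsDiag := by simp [hab.ne]
  have hEs : H'.edgeSet = insert s(a, b) (H.edgeSet \ {s(u, v)}) := by
    rw [hH'def, hKdef, edgeSet_sup, edgeSet_sdiff, edgeSet_fromEdgeSet,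
      edgeSet_fromEdgeSet]
    ext g
    simp only [Set.mem_union, Set.mem_diff, Set.mem_singleton_iff,
      Set.mem_insert_iff, Set.mem_setOf_eq]
    constructor
    · rintro (⟨hg1, hg2⟩ | ⟨hg1, _⟩)
      · right
        refine ⟨hg1, ?_⟩
        intro hcon
        exact hg2 ⟨hcon, by rw [hcon]; exact hand⟩
      · left; exact hg1
    · rintro (hg | ⟨hg1, hg2⟩)
      · right; exact ⟨hg, by rw [hg]; exact hfnd⟩
      · left
        exact ⟨hg1, by rintro ⟨hcon, -⟩; exact hg2 hcon⟩
  have heE : s(u, v) ∈ (Set.toFinite H.edgeSet).toFinset := by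
    rw [Set.Finite.mem_toFinset]; exact heH
  have hfE : s(a, b) ∉ (Set.toFinite H.edgeSet).toFinset := by
    rw [Set.Finite.mem_toFinset]; exact fun hq => hfH (H.mem_edgeSet.mp hq)
  have hfin : (Set.toFinite H'.edgeSet).toFinset
      = insert s(a, b) (((Set.toFinite H.edgeSet).toFinset).erase s(u, v)) := by
    ext g
    simp only [Set.Finite.mem_toFinset, Finset.mem_insert, Finset.mem_erase,
      Set.Finite.mem_toFinset, hEs, Set.mem_insert_iff, Set.mem_diff,
      Set.mem_singleton_iff]
    tauto
  have hW : treeWeight H' w = w s(a, b) + (treeWeight H w - w s(u, v)) := by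
    rw [treeWeight, hfin, Finset.sum_insert (fun hq => hfE (Finset.mem_of_mem_erase hq)),
      Finset.sum_erase_eq_sub heE]
    rfl
  have hlt : treeWeight H' w < treeWeight H w := by
    have : w s(a, b) < w s(u, v) := lt_of_lt_of_le hwf hle
    rw [hW]; linarith
  have := hHmin H' ⟨hH'le, ⟨hH'conn, hH'acyc⟩⟩
  linarith
end

section
/- Let G = (V, E) be a finite connected weighted graph with nonnegative edge weights w and let S be a minimum spanning tree of G. For any two distinct vertices u, v ∈ V, the maximum edge weight along the unique path in S from u to v equals the minimum over all u–v paths P in G of the maximum edge weight along P (the bottleneck value of u and v in G). -/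
open SimpleGraph

lemma edges_mapLe' {V : Type*} {G G' : SimpleGraph V} (h : G ≤ G') {u v : V} (p : G.Walk u v) :
    (p.mapLe h).edges = p.edges := by
  rw [Walk.mapLe, Walk.edges_map]
  have h1 : ⇑(Hom.ofLE h) = id := funext fun a => Hom.ofLE_apply h a
  rw [h1, Sym2.map_id, List.map_id]

lemma exists_crossing_edge' {V : Type*} {G : SimpleGraph V} (C : Set V) :
    ∀ {a b : V} (q : G.Walk a b), a ∈ C → b ∉ C →
    ∃ x y, G.Adj x y ∧ x ∈ C ∧ y ∉ C ∧ s(x, y) ∈ q.edges := by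
  intro a b q
  induction q with
  | nil => intro ha hb; exact absurd ha hb
  | @cons a c b h q ih =>
    intro ha hb
    by_cases hc : c ∈ C
    · obtain ⟨x, y, h1, h2, h3, h4⟩ := ih hc hb
      exact ⟨x, y, h1, h2, h3, List.mem_cons_of_mem _ h4⟩
    · exact ⟨a, c, h, ha, hc, by simp⟩

lemma step_reach' {V : Type*} {H : SimpleGraph V} {a b c d : V}
    (hre : (H.deleteEdges {s(a,b)}).Reachable a b) (h : H.Adj c d) :
    (H.deleteEdges {s(a,b)}).Reachable c d := by
  by_cases he : s(c, d) = s(a, b)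
  · rw [Sym2.eq_iff] at he
    rcases he with ⟨rfl, rfl⟩ | ⟨rfl, rfl⟩
    · exact hre
    · exact hre.symm
  · exact (SimpleGraph.deleteEdges_adj.mpr ⟨h, by simpa using he⟩).reachable

lemma connected_deleteEdges' {V : Type*} {H : SimpleGraph V} (hconn : H.Connected)
    {a b : V} (hre : (H.deleteEdges {s(a,b)}).Reachable a b) :
    (H.deleteEdges {s(a,b)}).Connected := by
  rw [connected_iff] at hconn ⊢
  refine ⟨fun z1 z2 => ?_, hconn.2⟩
  obtain ⟨q⟩ := hconn.1 z1 z2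
  induction q with
  | nil => exact Reachable.refl _
  | cons h q ih => exact (step_reach' hre h).trans ih

lemma exists_spanning_tree' {V : Type*} [Fintype V] :
    ∀ (n : ℕ) (H : SimpleGraph V), H.edgeSet.ncard ≤ n → H.Connected →
      ∃ T, T ≤ H ∧ T.IsTree := by
  intro n
  induction n with
  | zero =>
    intro H hcard hconn
    have h0 : H.edgeSet = ∅ := Set.ncard_eq_zero (Set.toFinite _) |>.mp (Nat.le_zero.mp hcard)
    have hbot : H = ⊥ := SimpleGraph.edgeSet_eq_empty.mp h0
    exact ⟨H, le_rfl, hconn, by rw [hbot]; exact isAcyclic_bot⟩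
  | succ n ih =>
    intro H hcard hconn
    by_cases hac : H.IsAcyclic
    · exact ⟨H, le_rfl, hconn, hac⟩
    · rw [isAcyclic_iff_forall_edge_isBridge] at hac
      push_neg at hac
      obtain ⟨e, he, hbr⟩ := hac
      induction e using Sym2.ind with
      | _ x y =>
      rw [SimpleGraph.isBridge_iff] at hbr
      push_neg at hbr
      have hadj : H.Adj x y := he
      have hre : (H.deleteEdges {s(x,y)}).Reachable x y := hbr
      have hconn' := connected_deleteEdges' hconn hre
      have hcard' : (H.deleteEdges {s(x,y)}).edgeSet.ncard ≤ n := by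
        rw [SimpleGraph.edgeSet_deleteEdges]
        have := Set.ncard_diff_singleton_lt_of_mem he (Set.toFinite _)
        omega
      obtain ⟨T, hle, ht⟩ := ih _ hcard' hconn'
      exact ⟨T, hle.trans (SimpleGraph.deleteEdges_le _), ht⟩

lemma reach_dichotomy' {V : Type*} {S : SimpleGraph V} (hconn : S.Connected) (a b z : V) :
    (S.deleteEdges {s(a,b)}).Reachable a z ∨ (S.deleteEdges {s(a,b)}).Reachable b z := by
  obtain ⟨q⟩ := hconn a z
  clear hconn
  have key : ∀ {c z : V}, S.Walk c z →
      ((S.deleteEdges {s(a,b)}).Reachable a c ∨ (S.deleteEdges {s(a,b)}).Reachable b c) →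
      ((S.deleteEdges {s(a,b)}).Reachable a z ∨ (S.deleteEdges {s(a,b)}).Reachable b z) := by
    intro c z q
    induction q with
    | nil => exact id
    | @cons c d z h q ih =>
      intro hc
      apply ih
      by_cases he : s(c, d) = s(a, b)
      · rw [Sym2.eq_iff] at he
        rcases he with ⟨rfl, rfl⟩ | ⟨rfl, rfl⟩
        · exact Or.inr (Reachable.refl _)
        · exact Or.inl (Reachable.refl _)
      · have hadj : (S.deleteEdges {s(a,b)}).Adj c d :=
          SimpleGraph.deleteEdges_adj.mpr ⟨h, by simpa using he⟩
        exact hc.imp (fun hr => hr.trans hadj.reachable) (fun hr => hr.trans hadj.reachable)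
  exact key q (Or.inl (Reachable.refl _))

lemma cut_property' {V : Type*} [Fintype V] {G : SimpleGraph V} {w : Sym2 V → ℝ}
    (hw : ∀ e, 0 ≤ w e) {S : SimpleGraph V} (hS : IsMST G w S)
    {a b : V} (hab : S.Adj a b) {x y : V} (hxy : G.Adj x y)
    (hx : (S.deleteEdges {s(a,b)}).Reachable a x)
    (hy : ¬ (S.deleteEdges {s(a,b)}).Reachable a y) :
    w s(a, b) ≤ w s(x, y) := by
  by_contra hlt
  push_neg at hlt
  set S' := S.deleteEdges {s(a,b)} with hS'def
  -- b not reachable from a in S'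
  have hbridge : ¬ S'.Reachable a b := by
    have hbr : S.IsBridge s(a, b) :=
      isAcyclic_iff_forall_adj_isBridge.mp hS.1.2.IsAcyclic hab
    exact SimpleGraph.isBridge_iff.mp hbr
  have hne : s(x,y) ≠ s(a,b) := fun h => absurd (congrArg w h) (ne_of_lt hlt)
  have hxny : x ≠ y := hxy.ne
  -- f not an edge of S
  have hfS : s(x,y) ∉ S.edgeSet := by
    intro hmem
    have : S'.Adj x y := SimpleGraph.deleteEdges_adj.mpr ⟨hmem, by simpa using hne⟩
    exact hy (hx.trans this.reachable)
  -- the exchanged graph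
  set T : SimpleGraph V := S' ⊔ fromEdgeSet {s(x,y)} with hTdef
  have hS'T : S' ≤ T := le_sup_left
  have hTle : T ≤ G := by
    apply sup_le
    · exact le_trans (SimpleGraph.deleteEdges_le _) hS.1.1
    · intro c d hcd
      rw [SimpleGraph.fromEdgeSet_adj] at hcd
      have hcd1 := hcd.1
      rcases Sym2.eq_iff.mp hcd.1 with ⟨rfl, rfl⟩ | ⟨rfl, rfl⟩
      · exact hxy
      · exact hxy.symm
  have hreab : T.Reachable a b := by
    have hby : S'.Reachable b y := (reach_dichotomy' hS.1.2.isConnected a b y).resolve_left hy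
    have hTxy : T.Adj x y :=
      (le_sup_right : fromEdgeSet {s(x,y)} ≤ T) ((SimpleGraph.fromEdgeSet_adj _).mpr ⟨rfl, hxny⟩)
    exact ((hx.mono hS'T).trans hTxy.reachable).trans (hby.mono hS'T).symm
  have hTconn : T.Connected := by
    rw [connected_iff]
    refine ⟨fun z1 z2 => ?_, hS.1.2.isConnected.nonempty⟩
    have base : ∀ z, T.Reachable a z := by
      intro z
      rcases reach_dichotomy' hS.1.2.isConnected a b z with h | h
      · exact h.mono hS'T
      · exact hreab.trans (h.mono hS'T)
    exact (base z1).symm.trans (base z2)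
  -- edge sets
  have hTedge : T.edgeSet = (S.edgeSet \ {s(a,b)}) ∪ {s(x,y)} := by
    rw [hTdef, SimpleGraph.edgeSet_sup, hS'def, SimpleGraph.edgeSet_deleteEdges,
      SimpleGraph.edgeSet_fromEdgeSet]
    congr 1
    ext g
    simp only [Set.mem_diff, Set.mem_singleton_iff, Set.mem_setOf_eq]
    constructor
    · exact fun h => h.1
    · rintro rfl
      exact ⟨rfl, by simp [Sym2.isDiag_iff_proj_eq, hxny]⟩
  -- weight computation
  have hwT : treeWeight T w = treeWeight S w - w s(a,b) + w s(x,y) := by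
    classical
    have hset : (Set.toFinite T.edgeSet).toFinset
        = insert (s(x,y)) (((Set.toFinite S.edgeSet).toFinset).erase (s(a,b))) := by
      ext g
      simp only [Set.Finite.mem_toFinset, hTedge, Set.mem_union, Set.mem_diff,
        Set.mem_singleton_iff, Finset.mem_insert, Finset.mem_erase, Set.Finite.mem_toFinset]
      tauto
    rw [treeWeight, hset, Finset.sum_insert (by
      simp only [Finset.mem_erase, Set.Finite.mem_toFinset]
      exact fun h => hfS h.2), Finset.sum_erase_eq_sub (by
      simp only [Set.Finite.mem_toFinset]; exact hab)]
    rw [treeWeight]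
    ring
  -- get spanning tree inside T
  obtain ⟨T0, hT0le, hT0tree⟩ := exists_spanning_tree' T.edgeSet.ncard T le_rfl hTconn
  have hT0w : treeWeight T0 w ≤ treeWeight T w := by
    apply Finset.sum_le_sum_of_subset_of_nonneg
    · intro g hg
      simp only [Set.Finite.mem_toFinset] at hg ⊢
      exact SimpleGraph.edgeSet_mono hT0le hg
    · exact fun g _ _ => hw g
  have hmin := hS.2 T0 ⟨hT0le.trans hTle, hT0tree⟩
  rw [hwT] at hT0w
  linarith

/-- Minimax (bottleneck) property of MSTs: if `S` is an MST of `G` and `m` is the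
maximum edge weight along the unique path `p` in `S` from `u` to `v` (`u ≠ v`), then `m`
is the least element of the set of "maximum edge weights along a `u`–`v` path of `G`",
i.e. `m` equals the bottleneck value of `u` and `v` in `G`. -/
theorem mst_path_max_eq_bottleneck {V : Type*} [Fintype V]
    (G : SimpleGraph V) (w : Sym2 V → ℝ)
    (hG : G.Connected) (hw : ∀ e, 0 ≤ w e)
    (S : SimpleGraph V) (hS : IsMST G w S)
    (u v : V) (huv : u ≠ v)
    (p : S.Walk u v) (hp : p.IsPath)
    (m : ℝ) (hm : IsGreatest (w '' {f | f ∈ p.edges}) m) :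
    IsLeast {x : ℝ | ∃ q : G.Walk u v, q.IsPath ∧ IsGreatest (w '' {f | f ∈ q.edges}) x}
      m := by
  classical
  have hle : S ≤ G := hS.1.1
  have hStree : S.IsTree := hS.1.2
  constructor
  · refine ⟨p.mapLe hle, (Walk.mapLe_isPath hle).mpr hp, ?_⟩
    have hedges : {f | f ∈ (p.mapLe hle).edges} = {f | f ∈ p.edges} := by
      rw [edges_mapLe']
    rw [hedges]
    exact hm
  · rintro xval ⟨q, hq, hgx⟩
    obtain ⟨e, he, hwe⟩ := hm.1
    simp only [Set.mem_setOf_eq] at he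
    obtain ⟨a, b, he, hwe⟩ : ∃ a b, s(a, b) ∈ p.edges ∧ w s(a, b) = m := by
      induction e using Sym2.ind with
      | _ a b => exact ⟨a, b, he, hwe⟩
    have hab : S.Adj a b := p.adj_of_mem_edges he
    set S' := S.deleteEdges {s(a,b)} with hS'def
    have hnuv : ¬ S'.Reachable u v := by
      rintro ⟨r⟩
      have hle' : S' ≤ S := SimpleGraph.deleteEdges_le _
      have hpath : ((r.toPath : S'.Walk u v).mapLe hle').IsPath :=
        (Walk.mapLe_isPath hle').mpr r.toPath.isPath
      obtain ⟨p0, _, huniq⟩ := hStree.existsUnique_path u v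
      have h1 := huniq _ hpath
      have h2 := huniq _ hp
      rw [← h2] at h1
      have he' : s(a,b) ∈ ((r.toPath : S'.Walk u v).mapLe hle').edges := h1 ▸ he
      rw [edges_mapLe'] at he'
      have hmem := Walk.edges_subset_edgeSet _ he'
      rw [hS'def, SimpleGraph.edgeSet_deleteEdges] at hmem
      exact hmem.2 rfl
    have key : ∀ (c d : V) (q' : G.Walk c d), (∀ f ∈ q'.edges, f ∈ q.edges) →
        S'.Reachable a c → ¬ S'.Reachable a d → m ≤ xval := by
      intro c d q' hsub hu hv
      obtain ⟨x0, y0, h1, h2, h3, h4⟩ :=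
        exists_crossing_edge' {z | S'.Reachable a z} q' hu hv
      have hcut : w s(a,b) ≤ w s(x0,y0) := cut_property' hw hS hab h1 h2 h3
      have hxle : w s(x0, y0) ≤ xval := hgx.2 ⟨s(x0, y0), hsub _ h4, rfl⟩
      linarith [hwe ▸ hcut]
    by_cases huC : S'.Reachable a u
    · have hvC : ¬ S'.Reachable a v := fun h => hnuv (huC.symm.trans h)
      exact key u v q (fun f hf => hf) huC hvC
    · have hbu : S'.Reachable b u :=
        (reach_dichotomy' hStree.isConnected a b u).resolve_left huC
      have hvC : S'.Reachable a v := by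
        rcases reach_dichotomy' hStree.isConnected a b v with h | h
        · exact h
        · exact absurd (hbu.symm.trans h) hnuv
      exact key v u q.reverse (fun f hf => by
        rwa [Walk.edges_reverse, List.mem_reverse] at hf) hvC huC
end

section
/- Let G = (V, E) be a finite connected weighted graph with nonnegative edge weights w and let T ⊆ V with |T| ≥ 2. Let M denote the minimum total weight of a spanning tree of the metric completion of T, and let SMT denote the minimum total edge weight of a connected subgraph of G whose vertex set contains T (a Steiner tree for T in G). Then M ≤ 2 · SMT. -/
open SimpleGraph

/-- Weighted graph distance: the minimum (infimum) total weight of a walk from `u` to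
`v` in `G`. -/
noncomputable def wdist {V : Type*} (G : SimpleGraph V) (w : Sym2 V → ℝ) (u v : V) : ℝ :=
  sInf {x | ∃ p : G.Walk u v, x = (p.edges.map w).sum}

/-- The total edge weight of a subgraph of `G`. -/
noncomputable def subgraphWeight {V : Type*} [Finite V] {G : SimpleGraph V}
    (H : G.Subgraph) (w : Sym2 V → ℝ) : ℝ :=
  ∑ e ∈ (Set.toFinite H.edgeSet).toFinset, w e

/-! ### Auxiliary lemmas -/

section Aux

lemma walkWeight_nonneg {V : Type*} {G : SimpleGraph V} {w : Sym2 V → ℝ}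
    (hw : ∀ e, 0 ≤ w e) {u v : V} (p : G.Walk u v) :
    0 ≤ (p.edges.map w).sum := by
  apply List.sum_nonneg; intro x hx
  obtain ⟨e, -, rfl⟩ := List.mem_map.1 hx; exact hw e

lemma wdist_nonneg {V : Type*} {G : SimpleGraph V} {w : Sym2 V → ℝ}
    (hw : ∀ e, 0 ≤ w e) (u v : V) : 0 ≤ wdist G w u v := by
  apply Real.sInf_nonneg
  rintro x ⟨p, rfl⟩; exact walkWeight_nonneg hw p

lemma wdist_le {V : Type*} {G : SimpleGraph V} {w : Sym2 V → ℝ}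
    (hw : ∀ e, 0 ≤ w e) {u v : V} (p : G.Walk u v) :
    wdist G w u v ≤ (p.edges.map w).sum := by
  apply csInf_le
  · exact ⟨0, by rintro x ⟨q, rfl⟩; exact walkWeight_nonneg hw q⟩
  · exact ⟨p, rfl⟩

/-- The total weight of a finite graph. -/
noncomputable def graphW {W : Type*} [Finite W] (S : SimpleGraph W) (wt : Sym2 W → ℝ) : ℝ :=
  ∑ e ∈ (Set.toFinite S.edgeSet).toFinset, wt e

lemma graphW_nonneg {W : Type*} [Finite W] (S : SimpleGraph W) {wt : Sym2 W → ℝ}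
    (hwt : ∀ e, 0 ≤ wt e) : 0 ≤ graphW S wt :=
  Finset.sum_nonneg fun e _ => hwt e

lemma reach_induce {W : Type*} (S : SimpleGraph W) (v : W) :
    ∀ {a b : W} (p : S.Walk a b) (ha : a ≠ v) (hb : b ≠ v), v ∉ p.support →
      (S.induce {x | x ≠ v}).Reachable ⟨a, ha⟩ ⟨b, hb⟩ := by
  intro a b p
  induction p with
  | nil => intro _ _ _; rfl
  | @cons a c b h q ih =>
    intro ha hb hv
    rw [Walk.support_cons, List.mem_cons] at hv
    push_neg at hv
    have hc : c ≠ v := fun hcv => hv.2 (hcv ▸ q.start_mem_support)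
    exact (Adj.reachable (by exact h : (S.induce {x | x ≠ v}).Adj ⟨a, ha⟩ ⟨c, hc⟩)).trans
      (ih hc hb hv.2)

/-- In a finite connected graph, from any vertex there is a closed walk visiting all
vertices of total weight at most twice the total edge weight. -/
theorem tour (n : ℕ) : ∀ {W : Type*} [Fintype W] (S : SimpleGraph W),
    Fintype.card W ≤ n → S.Connected → ∀ (wt : Sym2 W → ℝ), (∀ e, 0 ≤ wt e) → ∀ u : W,
    ∃ p : S.Walk u u, (∀ v : W, v ∈ p.support) ∧
      (p.edges.map wt).sum ≤ 2 * graphW S wt := by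
  induction n with
  | zero =>
    intro W _ S hcard hS wt hwt u
    exact absurd (Fintype.card_pos_iff.2 ⟨u⟩) (by omega)
  | succ n ih =>
    intro W _ S hcard hS wt hwt u
    by_cases hone : Fintype.card W ≤ 1
    · refine ⟨Walk.nil, ?_, ?_⟩
      · have : Subsingleton W := Fintype.card_le_one_iff_subsingleton.1 hone
        intro v; simp [Subsingleton.elim v u]
      · simp only [Walk.edges_nil, List.map_nil, List.sum_nil]
        exact mul_nonneg (by norm_num) (graphW_nonneg S hwt)
    -- main case
    · classical
      push_neg at hone
      -- pick v farthest from u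
      obtain ⟨v, -, hvmax⟩ := Finset.exists_max_image Finset.univ (fun x => S.dist u x)
        ⟨u, Finset.mem_univ u⟩
      have hvu : v ≠ u := by
        obtain ⟨y, hy⟩ := Fintype.exists_ne_of_one_lt_card hone u
        have h1 : 0 < S.dist u y := hS.pos_dist_of_ne (Ne.symm hy)
        have h2 : 0 < S.dist u v := lt_of_lt_of_le h1 (hvmax y (Finset.mem_univ y))
        intro h; rw [h] at h2; simp [SimpleGraph.dist_self] at h2
      -- every x ≠ v admits a u-x walk avoiding v
      have key : ∀ x : W, x ≠ v → ∃ p : S.Walk u x, v ∉ p.support := by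
        intro x hx
        obtain ⟨p, hp⟩ := Reachable.exists_walk_length_eq_dist (hS u x)
        refine ⟨p, fun hv => ?_⟩
        have hsplit := congrArg Walk.length (p.take_spec hv)
        rw [Walk.length_append] at hsplit
        have h1 : S.dist u v ≤ (p.takeUntil v hv).length := S.dist_le _
        have h2 : 1 ≤ (p.dropUntil v hv).length := by
          by_contra h
          push_neg at h
          interval_cases h' : (p.dropUntil v hv).length
          · exact hx (Walk.eq_of_length_eq_zero h').symm
        have h3 : S.dist u x ≤ S.dist u v := hvmax x (Finset.mem_univ x)
        omega
      -- induced subgraph on the complement of v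
      have hus : u ∈ {x | x ≠ v} := Ne.symm hvu
      have hcard' : Fintype.card ↥{x | x ≠ v} ≤ n := by
        have h : Fintype.card ↥{x | x ≠ v} < Fintype.card W :=
          Fintype.card_lt_of_injective_of_notMem (b := v) Subtype.val
            Subtype.val_injective (by rintro ⟨⟨x, hx⟩, h⟩; exact hx h)
        omega
      have hS' : (S.induce {x | x ≠ v}).Connected := by
        rw [connected_iff]
        refine ⟨fun x y => ?_, ⟨⟨u, hus⟩⟩⟩
        obtain ⟨px, hpx⟩ := key x.1 x.2
        obtain ⟨py, hpy⟩ := key y.1 y.2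
        exact ((reach_induce S v px (Ne.symm hvu) x.2 hpx).symm.trans
          (reach_induce S v py (Ne.symm hvu) y.2 hpy)).mono le_rfl |>.mono le_rfl
      obtain ⟨q', hq'cov, hq'w⟩ := ih (S.induce {x | x ≠ v}) hcard' hS'
        (fun e => wt (e.map Subtype.val)) (fun e => hwt _) ⟨u, hus⟩
      -- map the tour back into S
      let f : S.induce {x | x ≠ v} →g S := ⟨Subtype.val, fun h => h⟩
      let q : S.Walk u u := q'.map f
      have hqedges : q.edges = q'.edges.map (Sym2.map Subtype.val) := Walk.edges_map _ _
      have hqw : (q.edges.map wt).sum ≤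
          2 * graphW (S.induce {x | x ≠ v}) (fun e => wt (e.map Subtype.val)) := by
        rw [hqedges, List.map_map]
        exact hq'w
      -- a neighbor b of v
      obtain ⟨p0⟩ := hS v u
      obtain ⟨b, hb⟩ : ∃ b, S.Adj v b := by
        cases p0 with
        | nil => exact absurd rfl hvu
        | cons h _ => exact ⟨_, h⟩
      have hbv : b ≠ v := hb.ne'
      have hbq : b ∈ q.support := by
        rw [Walk.support_map]
        exact List.mem_map.2 ⟨⟨b, hbv⟩, hq'cov _, rfl⟩
      -- build the detour walk
      refine ⟨(q.takeUntil b hbq).append (Walk.cons hb.symm (Walk.cons hb (q.dropUntil b hbq))),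
        ?_, ?_⟩
      · intro x
        rw [Walk.mem_support_append_iff, Walk.support_cons, Walk.support_cons]
        by_cases hx : x = v
        · subst hx; right; simp
        · have : x ∈ q.support := by
            rw [Walk.support_map]
            exact List.mem_map.2 ⟨⟨x, hx⟩, hq'cov _, rfl⟩
          rw [← q.take_spec hbq, Walk.mem_support_append_iff] at this
          rcases this with h | h
          · exact Or.inl h
          · right; simp only [List.mem_cons]; right; right; exact h
      · have hre : ((q.takeUntil b hbq).append
            (Walk.cons hb.symm (Walk.cons hb (q.dropUntil b hbq)))).edges
            = (q.takeUntil b hbq).edges ++ (s(b,v) :: s(v,b) :: (q.dropUntil b hbq).edges) := by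
          rw [Walk.edges_append, Walk.edges_cons, Walk.edges_cons]
        have hqe : q.edges = (q.takeUntil b hbq).edges ++ (q.dropUntil b hbq).edges := by
          conv_lhs => rw [← q.take_spec hbq]
          rw [Walk.edges_append]
        have hswap : s(v,b) = s(b,v) := Sym2.eq_swap
        have hsum : ((((q.takeUntil b hbq).append (Walk.cons hb.symm
            (Walk.cons hb (q.dropUntil b hbq)))).edges).map wt).sum
            = (q.edges.map wt).sum + 2 * wt s(b,v) := by
          rw [hre, hqe]
          simp only [List.map_append, List.sum_append, List.map_cons, List.sum_cons, hswap]
          ring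
        -- edge-sum comparison
        have hedge : graphW (S.induce {x | x ≠ v}) (fun e => wt (e.map Subtype.val))
            + wt s(b,v) ≤ graphW S wt := by
          have hBmem : s(b,v) ∈ (Set.toFinite S.edgeSet).toFinset := by
            rw [Set.Finite.mem_toFinset, mem_edgeSet]; exact hb.symm
          have himg : ((Set.toFinite (S.induce {x | x ≠ v}).edgeSet).toFinset).image
              (Sym2.map Subtype.val) ⊆ ((Set.toFinite S.edgeSet).toFinset).erase s(b,v) := by
            intro e he
            obtain ⟨e', he', rfl⟩ := Finset.mem_image.1 he
            rw [Set.Finite.mem_toFinset] at he'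
            refine Finset.mem_erase.2 ⟨?_, ?_⟩
            · intro hcontra
              have : v ∈ Sym2.map Subtype.val e' := by
                rw [hcontra]; simp [Sym2.mem_iff]
              obtain ⟨x, -, hx⟩ := Sym2.mem_map.1 this
              exact x.2 hx
            · rw [Set.Finite.mem_toFinset]
              revert he'
              refine Sym2.ind (fun x y he' => ?_) e'
              rw [Sym2.map_pair_eq, mem_edgeSet]
              rw [mem_edgeSet] at he'
              exact he'
          have hinjOn : Set.InjOn (Sym2.map (Subtype.val : ↥{x | x ≠ v} → W))
              ((Set.toFinite (S.induce {x | x ≠ v}).edgeSet).toFinset : Set (Sym2 ↥{x | x ≠ v})) :=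
            fun a _ c _ h => Sym2.map.injective Subtype.val_injective h
          have h1 : graphW (S.induce {x | x ≠ v}) (fun e => wt (e.map Subtype.val))
              = ∑ e ∈ ((Set.toFinite (S.induce {x | x ≠ v}).edgeSet).toFinset).image
                  (Sym2.map Subtype.val), wt e := by
            rw [Finset.sum_image (fun a ha c hc h => hinjOn ha hc h)]
            rfl
          have h2 : ∑ e ∈ ((Set.toFinite (S.induce {x | x ≠ v}).edgeSet).toFinset).image
              (Sym2.map Subtype.val), wt e
              ≤ ∑ e ∈ ((Set.toFinite S.edgeSet).toFinset).erase s(b,v), wt e :=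
            Finset.sum_le_sum_of_subset_of_nonneg himg (fun e _ _ => hwt e)
          have h3 : wt s(b,v) + ∑ e ∈ ((Set.toFinite S.edgeSet).toFinset).erase s(b,v), wt e
              = graphW S wt := Finset.add_sum_erase _ wt hBmem
          rw [h1]
          linarith
        rw [hsum]
        linarith

/-- Tour of a connected subgraph. -/
lemma subgraph_tour {V : Type*} [Fintype V] {G : SimpleGraph V} (w : Sym2 V → ℝ)
    (hw : ∀ e, 0 ≤ w e) (St : G.Subgraph) (hc : St.Connected) {u : V} (hu : u ∈ St.verts) :
    ∃ p : G.Walk u u, (∀ v ∈ St.verts, v ∈ p.support) ∧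
      (p.edges.map w).sum ≤ 2 * subgraphWeight St w := by
  classical
  letI : Fintype ↥St.verts := Fintype.ofFinite _
  have hcoe : St.coe.Connected := hc.coe
  obtain ⟨p', hcov, hpw⟩ := tour (Fintype.card ↥St.verts) St.coe le_rfl hcoe
    (fun e => w (e.map Subtype.val)) (fun e => hw _) ⟨u, hu⟩
  refine ⟨p'.map St.hom, ?_, ?_⟩
  · intro v hv
    erw [Walk.support_map]
    exact List.mem_map.2 ⟨⟨v, hv⟩, hcov _, rfl⟩
  · erw [Walk.edges_map, List.map_map]
    have himg : ((Set.toFinite St.coe.edgeSet).toFinset).image (Sym2.map Subtype.val)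
        = (Set.toFinite St.edgeSet).toFinset := by
      ext e
      simp only [Finset.mem_image, Set.Finite.mem_toFinset]
      rw [← St.image_coe_edgeSet_coe]
      exact ⟨fun ⟨a, ha, he⟩ => ⟨a, ha, he⟩, fun ⟨a, ha, he⟩ => ⟨a, ha, he⟩⟩
    have heq : graphW St.coe (fun e => w (e.map Subtype.val)) = subgraphWeight St w := by
      unfold graphW subgraphWeight
      rw [← himg, Finset.sum_image
        (fun a _ c _ h => Sym2.map.injective Subtype.val_injective h)]
    rw [← heq]
    exact hpw

/-- Chained distances along a list. -/
noncomputable def chainSum {V : Type*} (G : SimpleGraph V) (w : Sym2 V → ℝ) : V → List V → ℝ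
  | _, [] => 0
  | a, x :: l => wdist G w a x + chainSum G w x l

lemma chainSum_nonneg {V : Type*} {G : SimpleGraph V} {w : Sym2 V → ℝ}
    (hw : ∀ e, 0 ≤ w e) : ∀ (l : List V) (a : V), 0 ≤ chainSum G w a l := by
  intro l
  induction l with
  | nil => intro a; exact le_refl 0
  | cons x l ih =>
    intro a
    have := wdist_nonneg (G := G) hw a x
    have := ih x
    simp only [chainSum]
    linarith

/-- Greedy shortcutting: a walk visiting a finite set `S` of vertices gives an ordering of
`S` whose chained distance is at most the weight of the walk. -/
lemma greedy {V : Type*} [DecidableEq V] {G : SimpleGraph V} {w : Sym2 V → ℝ}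
    (hw : ∀ e, 0 ≤ w e) :
    ∀ (k : ℕ) (S : Finset V), S.card ≤ k → ∀ {a b : V} (p : G.Walk a b),
      (∀ x ∈ S, x ∈ p.support) →
      ∃ l : List V, l.Nodup ∧ l.toFinset = S ∧ chainSum G w a l ≤ (p.edges.map w).sum := by
  intro k
  induction k with
  | zero =>
    intro S hS a b p hsup
    have : S = ∅ := Finset.card_eq_zero.1 (Nat.le_zero.1 hS)
    subst this
    exact ⟨[], List.nodup_nil, by simp,
      by simpa [chainSum] using walkWeight_nonneg hw p⟩
  | succ k ihk =>
    intro S hS a b p hsup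
    rcases S.eq_empty_or_nonempty with rfl | hne
    · exact ⟨[], List.nodup_nil, by simp,
        by simpa [chainSum] using walkWeight_nonneg hw p⟩
    obtain ⟨t, htS, htmin⟩ := Finset.exists_min_image S (fun x => p.support.idxOf x) hne
    have htp : t ∈ p.support := hsup t htS
    have hdrop : ∀ x ∈ S, x ∈ (p.dropUntil t htp).support := by
      intro x hxS
      by_cases hxt : x = t
      · subst hxt; exact Walk.start_mem_support _
      · have hxp : x ∈ p.support := hsup x hxS
        rw [← p.take_spec htp, Walk.mem_support_append_iff] at hxp
        rcases hxp with h | h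
        · exfalso
          -- x occurs strictly before t in p.support
          set A := (p.takeUntil t htp).support with hA
          have hAne : A ≠ [] := (p.takeUntil t htp).support_ne_nil
          have hlast : A.getLast hAne = t := (p.takeUntil t htp).getLast_support
          have hAsplit : A.dropLast ++ [t] = A := by
            conv_rhs => rw [← List.dropLast_append_getLast hAne]
            rw [hlast]
          have hcount : A.count t = 1 := p.count_support_takeUntil_eq_one htp
          have htA' : t ∉ A.dropLast := by
            intro hmem
            have h2 : A.count t = A.dropLast.count t + [t].count t := by
              conv_lhs => rw [← hAsplit]
              rw [List.count_append]
            have h3 : [t].count t = 1 := by simp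
            have h1 : 0 < A.dropLast.count t := List.count_pos_iff.2 hmem
            omega
          have hxA' : x ∈ A.dropLast := by
            rw [← hAsplit] at h
            rcases List.mem_append.1 h with h' | h'
            · exact h'
            · exact absurd (List.mem_singleton.1 h') hxt
          have hps : p.support = A.dropLast ++ (t :: (p.dropUntil t htp).support.tail) := by
            conv_lhs => rw [← p.take_spec htp]
            rw [Walk.support_append, ← hA]
            conv_lhs => rw [← hAsplit]
            rw [List.append_assoc, List.singleton_append]
          have hidxx : p.support.idxOf x < A.dropLast.length := by
            rw [hps, List.idxOf_append_of_mem hxA']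
            exact List.idxOf_lt_length_iff.2 hxA'
          have hidxt : p.support.idxOf t = A.dropLast.length := by
            rw [hps, List.idxOf_append_of_notMem htA']
            simp only [List.idxOf_cons_self, Nat.add_zero]
          have := htmin x hxS
          omega
        · exact h
    have hcard' : (S.erase t).card ≤ k := by
      rw [Finset.card_erase_of_mem htS]
      omega
    obtain ⟨l, hnd, hfin, hsum⟩ := ihk (S.erase t) hcard' (p.dropUntil t htp)
      (fun x hx => hdrop x (Finset.mem_of_mem_erase hx))
    refine ⟨t :: l, ?_, ?_, ?_⟩
    · refine List.nodup_cons.2 ⟨fun hmem => ?_, hnd⟩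
      have := hfin ▸ List.mem_toFinset.2 hmem
      exact (Finset.mem_erase.1 this).1 rfl
    · rw [List.toFinset_cons, hfin, Finset.insert_erase htS]
    · have h1 : wdist G w a t ≤ ((p.takeUntil t htp).edges.map w).sum := wdist_le hw _
      have h2 : (p.edges.map w).sum = ((p.takeUntil t htp).edges.map w).sum
          + ((p.dropUntil t htp).edges.map w).sum := by
        conv_lhs => rw [← p.take_spec htp]
        rw [Walk.edges_append, List.map_append, List.sum_append]
      simp only [chainSum]
      linarith

/-- Reachability of elements along a chain of adjacencies. -/
lemma chain_reach_head {α : Type*} (Q : SimpleGraph α) :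
    ∀ (m : List α) (a : α), (∀ x y, (x, y) ∈ (a :: m).zip m → Q.Adj x y) →
      ∀ x ∈ a :: m, Q.Reachable a x := by
  intro m
  induction m with
  | nil =>
    intro a _ x hx
    rw [List.mem_singleton] at hx; subst hx; rfl
  | cons b rest ih =>
    intro a hadj x hx
    rcases List.mem_cons.1 hx with rfl | hx
    · rfl
    · have h1 : Q.Adj a b := hadj a b (by rw [List.zip_cons_cons]; exact List.mem_cons_self)
      refine (h1.reachable).trans (ih b (fun x y hxy => hadj x y ?_) x hx)
      rw [List.zip_cons_cons]
      exact List.mem_cons_of_mem _ hxy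
      
lemma nodup_zip_ne {α : Type*} : ∀ {l : List α}, l.Nodup → ∀ {x y : α},
    (x, y) ∈ l.zip l.tail → x ≠ y := by
  intro l
  induction l with
  | nil => intro _ x y h; simp at h
  | cons a m ih =>
    intro hnd x y hxy
    cases m with
    | nil => simp at hxy
    | cons b rest =>
      rw [List.tail_cons, List.zip_cons_cons] at hxy
      rcases List.mem_cons.1 hxy with heq | hmem
      · obtain ⟨rfl, rfl⟩ := Prod.mk.injEq x y a b ▸ heq
        intro hxy2
        exact (List.nodup_cons.1 hnd).1 (hxy2 ▸ List.mem_cons_self)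
      · exact ih (List.nodup_cons.1 hnd).2 hmem

/-- Sum over consecutive pairs equals `chainSum`. -/
lemma zip_chain {V : Type*} (G : SimpleGraph V) (w : Sym2 V → ℝ) {T : Set V} :
    ∀ (m : List ↥T) (x : ↥T),
      (((x :: m).zip m).map (fun q : ↥T × ↥T => wdist G w ↑q.1 ↑q.2)).sum
        = chainSum G w ↑x (m.map Subtype.val) := by
  intro m
  induction m with
  | nil => intro x; simp [chainSum]
  | cons y r ih =>
    intro x
    rw [List.zip_cons_cons]
    simp only [List.map_cons, List.sum_cons, chainSum]
    rw [ih y]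

/-- Sum over a list's `toFinset` is at most the list sum, for nonnegative weights. -/
lemma toFinset_sum_le {β : Type*} [DecidableEq β] (f : β → ℝ) (hf : ∀ x, 0 ≤ f x) :
    ∀ (L : List β), ∑ e ∈ L.toFinset, f e ≤ (L.map f).sum := by
  intro L
  induction L with
  | nil => simp
  | cons a L ih =>
    rw [List.toFinset_cons, List.map_cons, List.sum_cons]
    by_cases ha : a ∈ L.toFinset
    · rw [Finset.insert_eq_self.2 ha]
      have := hf a
      linarith
    · rw [Finset.sum_insert ha]
      linarith

/-- Every finite connected graph contains a spanning tree. -/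
lemma exists_spanning_tree {W : Type*} [Finite W] (Q : SimpleGraph W) (hQ : Q.Connected) :
    ∃ H, H ≤ Q ∧ H.IsTree := by
  classical
  have hex : ∃ n, ∃ H, H ≤ Q ∧ H.Connected ∧ H.edgeSet.ncard = n := ⟨_, Q, le_rfl, hQ, rfl⟩
  obtain ⟨H, hHQ, hHc, hHcard⟩ := Nat.find_spec hex
  refine ⟨H, hHQ, ⟨hHc, ?_⟩⟩
  rw [isAcyclic_iff_forall_adj_isBridge]
  intro v v' hadj
  by_contra hnb
  rw [isBridge_iff] at hnb
  push_neg at hnb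
  have hreach : (H \ fromEdgeSet {s(v,v')}).Reachable v v' := hnb
  have hdel : ∀ {a b : W}, H.Walk a b → (H \ fromEdgeSet {s(v,v')}).Reachable a b := by
    intro a b p
    induction p with
    | nil => rfl
    | @cons a c b h q ih =>
      refine Reachable.trans ?_ ih
      by_cases he : s(a,c) = s(v,v')
      · rcases Sym2.eq_iff.1 he with ⟨rfl, rfl⟩ | ⟨rfl, rfl⟩
        · exact hreach
        · exact hreach.symm
      · refine Adj.reachable ?_
        rw [sdiff_adj]
        refine ⟨h, ?_⟩
        rw [fromEdgeSet_adj]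
        rintro ⟨h1, -⟩
        exact he (Set.mem_singleton_iff.1 h1)
  have hconn : (H \ fromEdgeSet {s(v,v')}).Connected := by
    rw [connected_iff]
    refine ⟨fun x y => ?_, hHc.nonempty⟩
    obtain ⟨p⟩ := hHc.preconnected x y
    exact hdel p
  have hEd : (H \ fromEdgeSet {s(v,v')}).edgeSet = H.edgeSet \ {s(v,v')} := by
    rw [edgeSet_sdiff, edgeSet_fromEdgeSet]
    ext e
    simp only [Set.mem_diff, Set.mem_singleton_iff, Set.mem_setOf_eq]
    constructor
    · rintro ⟨he, hnot⟩
      refine ⟨he, fun heq => hnot ⟨heq, ?_⟩⟩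
      subst heq
      rw [Sym2.mem_diagSet, Sym2.mk_isDiag_iff]
      exact hadj.ne
    · rintro ⟨he, hne⟩
      exact ⟨he, fun h => hne h.1⟩
  have hssub : (H \ fromEdgeSet {s(v,v')}).edgeSet ⊂ H.edgeSet := by
    rw [hEd]
    exact Set.sdiff_singleton_ssubset.2 (H.mem_edgeSet.2 hadj)
  have hlt : (H \ fromEdgeSet {s(v,v')}).edgeSet.ncard < Nat.find hex := by
    rw [← hHcard]
    exact Set.ncard_lt_ncard hssub (H.edgeSet.toFinite)
  have hge : Nat.find hex ≤ (H \ fromEdgeSet {s(v,v')}).edgeSet.ncard :=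
    Nat.find_min' hex ⟨_, le_trans sdiff_le hHQ, hconn, rfl⟩
  omega

end Aux

/-- The minimum spanning tree `H` of the metric completion of a terminal set `T`
(`|T| ≥ 2`) of a finite connected graph `G` with nonnegative weights has total weight at
most twice the weight of any Steiner tree for `T` in `G`, i.e. of any connected subgraph
of `G` whose vertex set contains `T`. -/
theorem metric_completion_mst_le_two_steiner {V : Type*} [Fintype V]
    (G : SimpleGraph V) (w : Sym2 V → ℝ)
    (hG : G.Connected) (hw : ∀ e, 0 ≤ w e)
    (T : Set V) (hT : 2 ≤ T.ncard)
    (wN : Sym2 ↥T → ℝ) (hwN : ∀ a b : ↥T, wN s(a, b) = wdist G w ↑a ↑b)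
    (H : SimpleGraph ↥T) (hH : IsMST (⊤ : SimpleGraph ↥T) wN H)
    (St : G.Subgraph) (hStConn : St.Connected) (hStT : T ⊆ St.verts) :
    treeWeight H wN ≤ 2 * subgraphWeight St w := by
  classical
  have hwN0 : ∀ e, 0 ≤ wN e := by
    intro e
    refine Sym2.ind (fun x y => ?_) e
    rw [hwN x y]
    exact wdist_nonneg hw _ _
  have hTfin : T.Finite := Set.toFinite T
  have hTne : T.Nonempty := by
    rcases Set.eq_empty_or_nonempty T with rfl | h
    · simp [Set.ncard_empty] at hT
    · exact h
  obtain ⟨t0, ht0⟩ := hTne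
  -- tour of the Steiner subgraph
  obtain ⟨p, hcov, hpw⟩ := subgraph_tour w hw St hStConn (hStT ht0)
  -- greedy ordering of the terminals
  obtain ⟨l, hnd, hfin, hchain⟩ := greedy hw hTfin.toFinset.card hTfin.toFinset le_rfl p
    (fun x hx => hcov x (hStT (hTfin.mem_toFinset.1 hx)))
  have hlT : ∀ x ∈ l, x ∈ T := fun x hx => hTfin.mem_toFinset.1 (hfin ▸ List.mem_toFinset.2 hx)
  -- lift to a list of terminals
  let l' : List ↥T := l.attach.map (fun x => (⟨x.1, hlT x.1 x.2⟩ : ↥T))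
  have hl'map : l'.map Subtype.val = l := by
    simp [l', List.map_map, Function.comp_def]
  have hl'nd : l'.Nodup := by
    refine List.Nodup.map ?_ (List.nodup_attach.2 hnd)
    intro x y hxy
    have hval : (x : V) = y := congrArg (Subtype.val : ↥T → V) hxy
    exact Subtype.ext hval
  have hl'mem : ∀ t : ↥T, t ∈ l' := by
    intro t
    have htl : (t : V) ∈ l := by
      have : (t : V) ∈ l.toFinset := hfin ▸ hTfin.mem_toFinset.2 t.2
      exact List.mem_toFinset.1 this
    exact List.mem_map.2 ⟨⟨t, htl⟩, List.mem_attach _ _, Subtype.ext rfl⟩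
  -- the chain graph
  cases hl' : l' with
  | nil => exact absurd (hl' ▸ hl'mem ⟨t0, ht0⟩) List.not_mem_nil
  | cons a m =>
  set E : List (Sym2 ↥T) := ((a :: m).zip m).map (fun q => s(q.1, q.2)) with hE
  set Q : SimpleGraph ↥T := fromEdgeSet {e | e ∈ E} with hQ
  have hQadj : ∀ x y : ↥T, (x, y) ∈ (a :: m).zip m → Q.Adj x y := by
    intro x y hxy
    rw [hQ, fromEdgeSet_adj]
    refine ⟨List.mem_map.2 ⟨(x, y), hxy, rfl⟩, ?_⟩
    have : (x, y) ∈ l'.zip l'.tail := by rw [hl']; exact hxy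
    exact nodup_zip_ne hl'nd this
  have hQconn : Q.Connected := by
    rw [connected_iff]
    refine ⟨fun x y => ?_, ⟨a⟩⟩
    have hx : x ∈ a :: m := hl' ▸ hl'mem x
    have hy : y ∈ a :: m := hl' ▸ hl'mem y
    exact (chain_reach_head Q m a hQadj x hx).symm.trans (chain_reach_head Q m a hQadj y hy)
  obtain ⟨H', hH'Q, hH'tree⟩ := exists_spanning_tree Q hQconn
  have hMST : treeWeight H wN ≤ treeWeight H' wN := hH.2 H' ⟨le_top, hH'tree⟩
  -- bound the weight of H'
  have hsub : (Set.toFinite H'.edgeSet).toFinset ⊆ E.toFinset := by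
    intro e he
    rw [Set.Finite.mem_toFinset] at he
    have h1 : e ∈ Q.edgeSet := edgeSet_mono hH'Q he
    rw [hQ, edgeSet_fromEdgeSet] at h1
    exact List.mem_toFinset.2 h1.1
  have hw1 : treeWeight H' wN ≤ (E.map wN).sum := by
    calc treeWeight H' wN ≤ ∑ e ∈ E.toFinset, wN e :=
          Finset.sum_le_sum_of_subset_of_nonneg hsub (fun e _ _ => hwN0 e)
      _ ≤ (E.map wN).sum := toFinset_sum_le wN hwN0 E
  have hw2 : (E.map wN).sum = chainSum G w ↑a (m.map Subtype.val) := by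
    rw [hE, List.map_map]
    rw [← zip_chain G w m a]
    congr 1
    refine List.map_congr_left ?_
    rintro ⟨x, y⟩ -
    exact hwN x y
  have hw3 : chainSum G w ↑a (m.map Subtype.val) ≤ chainSum G w t0 l := by
    have hl : l = (↑a : V) :: m.map Subtype.val := by
      rw [← hl'map, hl', List.map_cons]
    rw [hl]
    simp only [chainSum]
    have := wdist_nonneg (G := G) hw t0 (↑a : V)
    linarith
  calc treeWeight H wN ≤ treeWeight H' wN := hMST
    _ ≤ (E.map wN).sum := hw1
    _ = chainSum G w ↑a (m.map Subtype.val) := hw2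
    _ ≤ chainSum G w t0 l := hw3
    _ ≤ (p.edges.map w).sum := hchain
    _ ≤ 2 * subgraphWeight St w := hpw
end
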